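/- Assume k < n. Let P̃ be a k×k stochastic matrix that is stationary and reversible with respect to π̄ (π̄(i) := π(O_i)), and define the n×n matrix Q by Q(x,y) := P̃(i,j)·π(y)/π(O_j) for x ∈ O_i and y ∈ O_j. Then the spectrum (set of eigenvalues over ℝ) of the matrix G·Q·G equals spectrum(P̃) ∪ {0}. -/

import Mathlib

open Matrix Finset

/-- Total mass of the orbit (block) `i` under `π`. -/
noncomputable def orbMass {n k : ℕ} (π : Fin n → ℝ) (part : Fin n → Fin k) (i : Fin k) : ℝ :=
  ∑ z ∈ Finset.univ.filter (fun z => part z = i), π z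

/-- The Gibbs orbit kernel. -/
noncomputable def gibbsKer {n k : ℕ} (π : Fin n → ℝ) (part : Fin n → Fin k) :
    Matrix (Fin n) (Fin n) ℝ :=
  Matrix.of fun x y => if part y = part x then π y / orbMass π part (part x) else 0

lemma spec_iff_aux {m : Type*} [Fintype m] [DecidableEq m] (M : Matrix m m ℝ) (μ : ℝ) :
    μ ∈ spectrum ℝ M ↔ ∃ v ≠ (0 : m → ℝ), M *ᵥ v = μ • v := by
  rw [spectrum.mem_iff, Matrix.isUnit_iff_isUnit_det, isUnit_iff_ne_zero, not_not,
    ← Matrix.exists_mulVec_eq_zero_iff]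
  constructor
  · rintro ⟨v, hv, h⟩
    refine ⟨v, hv, ?_⟩
    have : (algebraMap ℝ (Matrix m m ℝ) μ - M) *ᵥ v = μ • v - M *ᵥ v := by
      rw [Matrix.sub_mulVec, Algebra.algebraMap_eq_smul_one, Matrix.smul_mulVec,
        Matrix.one_mulVec]
    rw [this, sub_eq_zero] at h
    exact h.symm
  · rintro ⟨v, hv, h⟩
    refine ⟨v, hv, ?_⟩
    rw [Matrix.sub_mulVec, Algebra.algebraMap_eq_smul_one, Matrix.smul_mulVec,
      Matrix.one_mulVec, h, sub_self]

/-- lifting a `π̄`-stationary, `π̄`-reversible stochastic matrix `P̃` on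
the orbit space to `Q` on the state space, `spec(GQG) = spec(P̃) ∪ {0}`. -/
theorem stmt13 {n k : ℕ} (hn : 0 < n) (hkn : k < n)
    (π : Fin n → ℝ) (hπpos : ∀ x, 0 < π x) (hπsum : ∑ x, π x = 1)
    (part : Fin n → Fin k) (hpart : Function.Surjective part)
    (Pt : Matrix (Fin k) (Fin k) ℝ)
    (hPtnonneg : ∀ i j, 0 ≤ Pt i j) (hPtrow : ∀ i, ∑ j, Pt i j = 1)
    (hPtstat : ∀ j, ∑ i, orbMass π part i * Pt i j = orbMass π part j)
    (hPtrev : ∀ i j, orbMass π part i * Pt i j = orbMass π part j * Pt j i)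
    (Q : Matrix (Fin n) (Fin n) ℝ)
    (hQ : ∀ x y : Fin n, Q x y = Pt (part x) (part y) * (π y / orbMass π part (part y))) :
    spectrum ℝ (gibbsKer π part * Q * gibbsKer π part) = spectrum ℝ Pt ∪ {0} := by
  -- positivity of orbit masses
  have hm : ∀ i, 0 < orbMass π part i := by
    intro i
    obtain ⟨x, hx⟩ := hpart i
    apply Finset.sum_pos' (fun z _ => (hπpos z).le)
    exact ⟨x, by simp [hx], hπpos x⟩
  -- auxiliary matrices
  set L : Matrix (Fin n) (Fin k) ℝ := Matrix.of fun x i => if part x = i then 1 else 0 with hL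
  set R : Matrix (Fin k) (Fin n) ℝ :=
    Matrix.of fun j y => if part y = j then π y / orbMass π part j else 0 with hR
  have hQLR : Q = L * Pt * R := by
    ext x y
    rw [hQ]
    simp only [Matrix.mul_apply, hL, hR, Matrix.of_apply]
    have h1 : ∀ j, (∑ i, (if part x = i then (1:ℝ) else 0) * Pt i j) = Pt (part x) j := by
      intro j
      rw [Finset.sum_eq_single (part x)]
      · simp
      · intro b _ hb; simp [Ne.symm hb]
      · simp
    simp only [h1]
    rw [Finset.sum_eq_single (part y)]
    · simp
    · intro b _ hb; simp [Ne.symm hb]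
    · simp
  have hRL : R * L = 1 := by
    ext j i
    simp only [Matrix.mul_apply, hL, hR, Matrix.of_apply]
    by_cases hij : j = i
    · subst hij
      rw [Matrix.one_apply_eq]
      have : ∀ y : Fin n, (if part y = j then π y / orbMass π part j else 0) *
          (if part y = j then (1:ℝ) else 0)
          = if part y = j then π y / orbMass π part j else 0 := by
        intro y; by_cases h : part y = j <;> simp [h]
      rw [Finset.sum_congr rfl fun y _ => this y, ← Finset.sum_filter, ← Finset.sum_div]
      rw [show (∑ z ∈ Finset.univ.filter (fun z => part z = j), π z) = orbMass π part j from rfl]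
      exact div_self (hm j).ne'
    · rw [Matrix.one_apply_ne hij]
      apply Finset.sum_eq_zero
      intro y _
      by_cases h : part y = j
      · rw [if_pos h, if_neg (show ¬ part y = i from fun hyi => hij (h.symm.trans hyi)), mul_zero]
      · rw [if_neg h, zero_mul]
  -- GQG = Q
  have hGQG : gibbsKer π part * Q * gibbsKer π part = Q := by
    have hGQ : gibbsKer π part * Q = Q := by
      ext x y
      simp only [Matrix.mul_apply, gibbsKer, Matrix.of_apply]
      have : ∀ z, (if part z = part x then π z / orbMass π part (part x) else 0) * Q z y
          = if part z = part x then
              π z * (Pt (part x) (part y) * (π y / orbMass π part (part y))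
                / orbMass π part (part x)) else 0 := by
        intro z
        by_cases h : part z = part x
        · simp only [h, if_true, hQ z y, h]
          ring
        · simp [h]
      rw [Finset.sum_congr rfl fun z _ => this z, ← Finset.sum_filter, ← Finset.sum_mul]
      rw [show (∑ z ∈ Finset.univ.filter (fun z => part z = part x), π z)
          = orbMass π part (part x) from rfl]
      rw [hQ x y, mul_comm, div_mul_cancel₀ _ (hm (part x)).ne']
    rw [hGQ]
    ext x y
    simp only [Matrix.mul_apply, gibbsKer, Matrix.of_apply]
    have : ∀ z, Q x z * (if part y = part z then π y / orbMass π part (part z) else 0)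
        = if part z = part y then
            π z * (Pt (part x) (part y) * π y / (orbMass π part (part y) * orbMass π part (part y)))
          else 0 := by
      intro z
      by_cases h : part z = part y
      · rw [if_pos h, if_pos h.symm, hQ x z, h]
        ring
      · rw [if_neg h, if_neg (fun hh => h hh.symm), mul_zero]
    rw [Finset.sum_congr rfl fun z _ => this z, ← Finset.sum_filter, ← Finset.sum_mul]
    rw [show (∑ z ∈ Finset.univ.filter (fun z => part z = part y), π z)
        = orbMass π part (part y) from rfl]
    rw [hQ x y]
    have hy := (hm (part y)).ne'
    field_simp
  rw [hGQG, hQLR]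
  -- now prove spectrum (L * Pt * R) = spectrum Pt ∪ {0}
  ext μ
  simp only [Set.mem_union, Set.mem_singleton_iff]
  constructor
  · intro hμ
    by_cases hμ0 : μ = 0
    · right; exact hμ0
    · left
      rw [spec_iff_aux] at hμ ⊢
      obtain ⟨v, hv, hvEq⟩ := hμ
      refine ⟨R *ᵥ v, ?_, ?_⟩
      · intro h0
        apply hv
        have : (L * Pt * R) *ᵥ v = L *ᵥ (Pt *ᵥ (R *ᵥ v)) := by
          rw [← Matrix.mulVec_mulVec, ← Matrix.mulVec_mulVec]
        rw [this, h0] at hvEq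
        simp only [Matrix.mulVec_zero] at hvEq
        exact (smul_eq_zero.mp hvEq.symm).resolve_left hμ0
      · have : Pt *ᵥ (R *ᵥ v) = (R * (L * Pt * R)) *ᵥ v := by
          rw [show R * (L * Pt * R) = (R * L) * Pt * R by simp only [Matrix.mul_assoc], hRL, Matrix.one_mul,
            ← Matrix.mulVec_mulVec]
        rw [this, ← Matrix.mulVec_mulVec, hvEq, Matrix.mulVec_smul]
  · intro hμ
    rcases hμ with hμ | hμ0
    · rw [spec_iff_aux] at hμ ⊢
      obtain ⟨w, hw, hwEq⟩ := hμ
      refine ⟨L *ᵥ w, ?_, ?_⟩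
      · intro h0
        apply hw
        have hLw : ∀ x, (L *ᵥ w) x = w (part x) := by
          intro x
          simp only [Matrix.mulVec, dotProduct, hL, Matrix.of_apply, ite_mul, one_mul,
            zero_mul]
          rw [Finset.sum_ite_eq]
          simp
        funext i
        obtain ⟨x, hx⟩ := hpart i
        rw [← hx, ← hLw x, h0]
        rfl
      · rw [Matrix.mulVec_mulVec, show L * Pt * R * L = L * Pt * (R * L) from Matrix.mul_assoc _ _ _,
            hRL, Matrix.mul_one, ← Matrix.mulVec_mulVec, hwEq, Matrix.mulVec_smul]
    · subst hμ0
      rw [spec_iff_aux]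
      -- pigeonhole: two points in the same orbit
      obtain ⟨x₁, x₂, hne, heq⟩ := Fintype.exists_ne_map_eq_of_card_lt part (by simpa using hkn)
      set v : Fin n → ℝ := π x₂ • (Pi.single x₁ (1:ℝ) : Fin n → ℝ) - π x₁ • (Pi.single x₂ (1:ℝ) : Fin n → ℝ) with hv
      refine ⟨v, ?_, ?_⟩
      · intro h0
        have := congrFun h0 x₁
        simp only [hv, Pi.sub_apply, Pi.smul_apply, Pi.single_eq_same, smul_eq_mul, mul_one,
          Pi.single_eq_of_ne hne, mul_zero, sub_zero, Pi.zero_apply] at this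
        exact (hπpos x₂).ne' this
      · have hRv : R *ᵥ v = 0 := by
          rw [hv]
          rw [Matrix.mulVec_sub, Matrix.mulVec_smul, Matrix.mulVec_smul,
            Matrix.mulVec_single, Matrix.mulVec_single]
          funext j
          simp only [Pi.sub_apply, Pi.smul_apply, smul_eq_mul, mul_one, hR, Matrix.of_apply,
            Pi.zero_apply, op_smul_eq_mul, Matrix.col_apply]
          by_cases h : part x₁ = j
          · rw [if_pos h, if_pos (heq.symm.trans h)]
            ring
          · rw [if_neg h, if_neg (fun hh => h (heq.trans hh))]
            ring
        rw [← Matrix.mulVec_mulVec, ← Matrix.mulVec_mulVec, hRv]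
        simp
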